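/- Let G and H be graphs and X ⊆ V(G). If G contains a subdivision of H as a subgraph, then G − X contains a subdivision of H − Y as a subgraph for some Y ⊆ V(H) with |Y| ≤ |X|; moreover this subdivision can be taken to be a subgraph of the original subdivision of H. -/

import Mathlib

open SimpleGraph

/-- A witness that `G` contains a subdivision of `H`: injective branch vertices and
internally disjoint linking paths, one for each edge of `H`. -/
structure Subdivision {α β : Type*} (G : SimpleGraph α) (H : SimpleGraph β) where
  branch : β ↪ α
  path : ∀ u v, H.Adj u v → G.Walk (branch u) (branch v)
  isPath : ∀ u v h, (path u v h).IsPath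
  symm : ∀ u v (h : H.Adj u v), path v u h.symm = (path u v h).reverse
  branch_not_internal : ∀ u v (h : H.Adj u v) (x : β),
    branch x ∈ (path u v h).support → x = u ∨ x = v
  internally_disjoint : ∀ u v (h : H.Adj u v) u' v' (h' : H.Adj u' v'),
    s(u, v) ≠ s(u', v') → ∀ w, w ∈ (path u v h).support →
      w ∈ (path u' v' h').support → ∃ x, w = branch x

/-- The vertex set of the subdivision (as a subgraph of `G`). -/
def Subdivision.supp {α β : Type*} {G : SimpleGraph α} {H : SimpleGraph β}
    (S : Subdivision G H) : Set α :=
  {w | ∃ u v h, w ∈ (S.path u v h).support}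

/-- The edge set of the subdivision (as a subgraph of `G`). -/
def Subdivision.edgeSet {α β : Type*} {G : SimpleGraph α} {H : SimpleGraph β}
    (S : Subdivision G H) : Set (Sym2 α) :=
  {e | ∃ u v h, e ∈ (S.path u v h).edges}

/-- `c` is a proper 2-coloring for the edges in `E`. -/
def ProperOn {α : Type*} (c : α → ZMod 2) (E : Set (Sym2 α)) : Prop :=
  ∀ e ∈ E, ∀ a b, e = s(a, b) → c a ≠ c b

/-- The subdivision is bipartite as a subgraph of `G`. -/
def Subdivision.IsBipartite {α β : Type*} {G : SimpleGraph α} {H : SimpleGraph β}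
    (S : Subdivision G H) : Prop :=
  ∃ c : α → ZMod 2, ProperOn c S.edgeSet

section InduceWalk

variable {α : Type*} {G : SimpleGraph α} {s : Set α}

/-- Lift a walk whose support lies in `s` to a walk in the induced subgraph. -/
def SimpleGraph.Walk.induceWalk : ∀ {u v : α} (w : G.Walk u v)
    (hs : ∀ x ∈ w.support, x ∈ s),
    (G.induce s).Walk ⟨u, hs u w.start_mem_support⟩ ⟨v, hs v w.end_mem_support⟩
  | _, _, Walk.nil, _ => Walk.nil
  | _, _, Walk.cons a w, hs =>
      Walk.cons (by exact a) (w.induceWalk fun x hx => hs x (by simp [hx]))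

lemma SimpleGraph.Walk.induceWalk_support : ∀ {u v : α} (w : G.Walk u v)
    (hs : ∀ x ∈ w.support, x ∈ s),
    (w.induceWalk hs).support.map Subtype.val = w.support
  | _, _, Walk.nil, _ => rfl
  | _, _, Walk.cons a w, hs => by
      exact congrArg (_ :: ·) (w.induceWalk_support _)

lemma SimpleGraph.Walk.induceWalk_edges : ∀ {u v : α} (w : G.Walk u v)
    (hs : ∀ x ∈ w.support, x ∈ s),
    (w.induceWalk hs).edges.map (Sym2.map Subtype.val) = w.edges
  | _, _, Walk.nil, _ => rfl
  | _, _, Walk.cons a w, hs => by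
      exact congrArg (_ :: ·) (w.induceWalk_edges _)

lemma SimpleGraph.Walk.induceWalk_append : ∀ {u v x : α} (w : G.Walk u v) (w' : G.Walk v x)
    (hs : ∀ y ∈ (w.append w').support, y ∈ s),
    (w.append w').induceWalk hs
      = (w.induceWalk fun y hy => hs y (by simp [hy])).append
        (w'.induceWalk fun y hy => hs y (by simp [hy]))
  | _, _, _, Walk.nil, w', hs => rfl
  | _, _, _, Walk.cons a w, w', hs => by
      simp only [Walk.cons_append, Walk.induceWalk]
      rw [Walk.induceWalk_append w w']
      rfl

lemma SimpleGraph.Walk.induceWalk_congr {u v : α} (w w' : G.Walk u v) (h : w = w')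
    (hs : ∀ x ∈ w.support, x ∈ s) (hs' : ∀ x ∈ w'.support, x ∈ s) :
    w.induceWalk hs = w'.induceWalk hs' := by subst h; rfl

lemma SimpleGraph.Walk.induceWalk_reverse : ∀ {u v : α} (w : G.Walk u v)
    (hs : ∀ x ∈ w.support, x ∈ s) (hs' : ∀ x ∈ w.reverse.support, x ∈ s),
    w.reverse.induceWalk hs' = (w.induceWalk hs).reverse
  | _, _, Walk.nil, _, _ => rfl
  | _, _, Walk.cons a w, hs, hs' => by
      rw [Walk.induceWalk_congr ((Walk.cons a w).reverse)
        (w.reverse.append (Walk.cons a.symm Walk.nil)) (by simp) hs'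
        (by intro x hx; apply hs'; simpa using hx)]
      rw [Walk.induceWalk_append]
      rw [Walk.induceWalk_reverse w (fun x hx => hs x (by simp [hx]))]
      simp only [Walk.induceWalk, Walk.reverse_cons]
      exact (Walk.reverse_cons _ _).symm

lemma SimpleGraph.Walk.induceWalk_isPath {u v : α} (w : G.Walk u v)
    (hs : ∀ x ∈ w.support, x ∈ s) (hw : w.IsPath) :
    (w.induceWalk hs).IsPath := by
  rw [Walk.isPath_def]
  have := w.induceWalk_support hs
  have h2 : w.support.Nodup := hw.support_nodup
  rw [← this] at h2
  exact h2.of_map _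

end InduceWalk

/-- Deleting a set `X` of vertices from a graph containing a subdivision of `H` leaves a
subdivision of `H - Y` for some `Y` with `|Y| ≤ |X|`, which is moreover a subgraph of the
original subdivision. -/
theorem subdivision_delete_verts {α β : Type*} [Fintype α] [Fintype β]
    [DecidableEq α] [DecidableEq β]
    (G : SimpleGraph α) (H : SimpleGraph β) (X : Finset α) (S : Subdivision G H) :
    ∃ (Y : Finset β) (S' : Subdivision (G.induce {a | a ∉ X}) (H.induce {b | b ∉ Y})),
      Y.card ≤ X.card ∧
      (∀ w ∈ S'.supp, (w : α) ∈ S.supp) ∧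
      (∀ e ∈ S'.edgeSet, e.map Subtype.val ∈ S.edgeSet) := by
  classical
  -- to each deleted vertex x, assign at most one vertex of H to delete
  set g : α → Finset β := fun x =>
    if h : ∃ b, S.branch b = x then {h.choose}
    else if h2 : ∃ p : Σ' u v, H.Adj u v, x ∈ (S.path p.1 p.2.1 p.2.2).support then
      {h2.choose.1}
    else ∅ with hg
  set Y : Finset β := X.biUnion g with hY
  -- claim A : branch vertices of remaining vertices avoid X
  have claimA : ∀ b : β, b ∉ Y → S.branch b ∉ X := by
    intro b hb hbX
    apply hb
    rw [hY, Finset.mem_biUnion]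
    refine ⟨S.branch b, hbX, ?_⟩
    have h : ∃ b', S.branch b' = S.branch b := ⟨b, rfl⟩
    have : h.choose = b := S.branch.injective h.choose_spec
    simp [hg, dif_pos h, this]
  -- claim B : paths between remaining vertices avoid X
  have claimB : ∀ u v (h : H.Adj u v), u ∉ Y → v ∉ Y →
      ∀ x ∈ (S.path u v h).support, x ∉ X := by
    intro u v h hu hv x hx hxX
    by_cases hb : ∃ b, S.branch b = x
    · obtain ⟨b, rfl⟩ := hb
      rcases S.branch_not_internal u v h b hx with rfl | rfl
      · exact hu (Finset.mem_biUnion.2 ⟨S.branch b, hxX, by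
          have h' : ∃ b', S.branch b' = S.branch b := ⟨b, rfl⟩
          have : h'.choose = b := S.branch.injective h'.choose_spec
          simp [hg, dif_pos h', this]⟩)
      · exact hv (Finset.mem_biUnion.2 ⟨S.branch b, hxX, by
          have h' : ∃ b', S.branch b' = S.branch b := ⟨b, rfl⟩
          have : h'.choose = b := S.branch.injective h'.choose_spec
          simp [hg, dif_pos h', this]⟩)
    · have h2 : ∃ p : Σ' u v, H.Adj u v, x ∈ (S.path p.1 p.2.1 p.2.2).support :=
        ⟨⟨u, v, h⟩, hx⟩
      have hmem : h2.choose.1 ∈ g x := by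
        have hgx : g x = if h : ∃ b, S.branch b = x then {h.choose}
            else if h2' : ∃ p : Σ' u v, H.Adj u v, x ∈ (S.path p.1 p.2.1 p.2.2).support then
              {h2'.choose.1}
            else ∅ := rfl
        rw [hgx, dif_neg hb, dif_pos h2]
        exact Finset.mem_singleton_self _
      have hYmem : h2.choose.1 ∈ Y := Finset.mem_biUnion.2 ⟨x, hxX, hmem⟩
      have hxsup : x ∈ (S.path h2.choose.1 h2.choose.2.1 h2.choose.2.2).support :=
        h2.choose_spec
      by_cases heq : s(u, v) = s(h2.choose.1, h2.choose.2.1)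
      · rw [Sym2.eq_iff] at heq
        rcases heq with ⟨rfl, -⟩ | ⟨-, rfl⟩
        · exact hu hYmem
        · exact hv hYmem
      · obtain ⟨b, rfl⟩ := S.internally_disjoint u v h _ _ h2.choose.2.2 heq x hx hxsup
        exact hb ⟨b, rfl⟩
  -- the induced adjacency unfolds to adjacency in H
  have adj_val : ∀ {u v : {b | b ∉ Y}}, (H.induce {b | b ∉ Y}).Adj u v → H.Adj u.1 v.1 :=
    fun h => h
  refine ⟨Y, ?_, ?_, ?_, ?_⟩
  · exact
      { branch := ⟨fun b => ⟨S.branch b, claimA b.1 b.2⟩,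
          fun a b hab => Subtype.ext (S.branch.injective (congrArg Subtype.val hab))⟩
        path := fun u v h =>
          ((S.path u.1 v.1 h).induceWalk
            (fun x hx => claimB u.1 v.1 h u.2 v.2 x hx))
        isPath := fun u v h =>
          SimpleGraph.Walk.induceWalk_isPath _ _ (S.isPath u.1 v.1 h)
        symm := by
          intro u v h
          have key : S.path v.1 u.1 (adj_val h).symm = (S.path u.1 v.1 h).reverse :=
            S.symm u.1 v.1 h
          have hs' : ∀ x ∈ (S.path u.1 v.1 h).reverse.support, x ∈ {a | a ∉ X} :=
            fun x hx => claimB u.1 v.1 h u.2 v.2 x (by simpa using hx)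
          exact (SimpleGraph.Walk.induceWalk_congr _ _ key
              (fun x hx => claimB v.1 u.1 (adj_val h).symm v.2 u.2 x hx) hs').trans
            (SimpleGraph.Walk.induceWalk_reverse _ _ hs')
        branch_not_internal := by
          intro u v h x hx
          have hx' : S.branch x.1 ∈ (S.path u.1 v.1 h).support := by
            rw [← (S.path u.1 v.1 h).induceWalk_support
              (fun y hy => claimB u.1 v.1 h u.2 v.2 y hy)]
            exact List.mem_map_of_mem hx
          rcases S.branch_not_internal u.1 v.1 h x.1 hx' with h1 | h1
          · exact Or.inl (Subtype.ext h1)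
          · exact Or.inr (Subtype.ext h1)
        internally_disjoint := by
          intro u v h u' v' h' hne w hw hw'
          have hwv : w.1 ∈ (S.path u.1 v.1 h).support := by
            rw [← (S.path u.1 v.1 h).induceWalk_support
              (fun y hy => claimB u.1 v.1 h u.2 v.2 y hy)]
            exact List.mem_map_of_mem hw
          have hwv' : w.1 ∈ (S.path u'.1 v'.1 h').support := by
            rw [← (S.path u'.1 v'.1 h').induceWalk_support
              (fun y hy => claimB u'.1 v'.1 h' u'.2 v'.2 y hy)]
            exact List.mem_map_of_mem hw'
          have hne' : s(u.1, v.1) ≠ s(u'.1, v'.1) := by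
            intro hc
            apply hne
            rw [Sym2.eq_iff] at hc ⊢
            rcases hc with ⟨h1, h2⟩ | ⟨h1, h2⟩
            · exact Or.inl ⟨Subtype.ext h1, Subtype.ext h2⟩
            · exact Or.inr ⟨Subtype.ext h1, Subtype.ext h2⟩
          obtain ⟨b, hb⟩ := S.internally_disjoint u.1 v.1 h u'.1 v'.1 h' hne' w.1 hwv hwv'
          have hbY : b ∉ Y := by
            rw [hb] at hwv
            rcases S.branch_not_internal u.1 v.1 h b hwv with rfl | rfl
            · exact u.2
            · exact v.2
          exact ⟨⟨b, hbY⟩, Subtype.ext hb⟩ }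
  · calc Y.card ≤ ∑ x ∈ X, (g x).card := Finset.card_biUnion_le
      _ ≤ ∑ _x ∈ X, 1 := by
          refine Finset.sum_le_sum fun x _ => ?_
          simp only [hg]
          split
          · simp
          · split <;> simp
      _ = X.card := by simp
  · rintro w ⟨u, v, h, hw⟩
    refine ⟨u.1, v.1, h, ?_⟩
    rw [← (S.path u.1 v.1 h).induceWalk_support
      (fun y hy => claimB u.1 v.1 h u.2 v.2 y hy)]
    exact List.mem_map_of_mem hw
  · rintro e ⟨u, v, h, he⟩
    refine ⟨u.1, v.1, h, ?_⟩
    rw [← (S.path u.1 v.1 h).induceWalk_edges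
      (fun y hy => claimB u.1 v.1 h u.2 v.2 y hy)]
    exact List.mem_map_of_mem he
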